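/- Let m, n ∈ ℕ and let w : (ℝ³×{1,2})^{m+n} → ℂ be measurable and essentially bounded with respect to the (m+n)-fold product μ of (Lebesgue measure on ℝ³ times counting measure on {1,2}), and suppose w vanishes μ-almost everywhere outside the set S̲_{m,n} := { ((k_1,λ_1),…,(k_m,λ_m),(k̃_1,λ̃_1),…,(k̃_n,λ̃_n)) ∈ (ℝ³×{1,2})^{m+n} : |k_i| < 1 for all i, |k̃_j| < 1 for all j, Σ_{i=1}^{m} |k_i| ≤ 1 and Σ_{j=1}^{n} |k̃_j| ≤ 1 }. Then ( ∫ (8π)^{-(m+n)} ∏_{i=1}^{m} |k_i|^{-2} · ∏_{j=1}^{n} |k̃_j|^{-2} · |w|² dμ )^{1/2} ≤ ‖w‖_{L^∞} · (m!·n!)^{-1/2}. -/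

import Mathlib

open MeasureTheory
open scoped ENNReal

noncomputable section

/-- The measure on a single photon variable `K = (k, λ) ∈ ℝ³ × {1,2}`:
Lebesgue measure times counting measure. -/
def photonMeasure : Measure (EuclideanSpace ℝ (Fin 3) × Fin 2) :=
  (volume : Measure (EuclideanSpace ℝ (Fin 3))).prod (Measure.count : Measure (Fin 2))

/-- The `(m+n)`-fold product measure on tuples `(K⁽ᵐ⁾, K̃⁽ⁿ⁾)`. -/
def photonProdMeasure (m n : ℕ) :
    Measure ((Fin m → EuclideanSpace ℝ (Fin 3) × Fin 2) ×
      (Fin n → EuclideanSpace ℝ (Fin 3) × Fin 2)) :=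
  (Measure.pi fun _ : Fin m => photonMeasure).prod (Measure.pi fun _ : Fin n => photonMeasure)

/-- The set `S̲_{m,n}`: all `|kᵢ| < 1`, all `|k̃ⱼ| < 1`, `Σᵢ |kᵢ| ≤ 1` and `Σⱼ |k̃ⱼ| ≤ 1`. -/
def underlineS (m n : ℕ) :
    Set ((Fin m → EuclideanSpace ℝ (Fin 3) × Fin 2) ×
      (Fin n → EuclideanSpace ℝ (Fin 3) × Fin 2)) :=
  {x | (∀ i, ‖(x.1 i).1‖ < 1) ∧ (∀ j, ‖(x.2 j).1‖ < 1) ∧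
    (∑ i, ‖(x.1 i).1‖) ≤ 1 ∧ (∑ j, ‖(x.2 j).1‖) ≤ 1}


open Measure Set Metric

instance : SigmaFinite photonMeasure := by unfold photonMeasure; infer_instance


lemma vol_ball3 : (volume : Measure (EuclideanSpace ℝ (Fin 3))) (ball 0 1)
    = ENNReal.ofReal (4 / 3 * Real.pi) := by
  rw [EuclideanSpace.volume_ball]
  have hg : Real.Gamma ((Fintype.card (Fin 3) : ℝ) / 2 + 1) = 3 / 4 * Real.sqrt Real.pi := by
    have h1 : ((Fintype.card (Fin 3) : ℝ)) / 2 + 1 = (3 / 2 + 1 : ℝ) := by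
      simp [Fintype.card_fin]
    rw [h1, Real.Gamma_add_one (by norm_num)]
    have h2 : (3 / 2 : ℝ) = 1 / 2 + 1 := by norm_num
    rw [h2, Real.Gamma_add_one (by norm_num), Real.Gamma_one_half_eq]
    ring
  rw [hg]
  have hs : Real.sqrt Real.pi ^ Fintype.card (Fin 3) / (3 / 4 * Real.sqrt Real.pi)
      = 4 / 3 * Real.pi := by
    have h0 : Real.sqrt Real.pi ≠ 0 := by positivity
    have : Real.sqrt Real.pi ^ Fintype.card (Fin 3) = Real.pi * Real.sqrt Real.pi := by
      rw [Fintype.card_fin]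
      rw [show (3:ℕ) = 2 + 1 from rfl, pow_succ, Real.sq_sqrt Real.pi_pos.le]
    rw [this]
    field_simp
  rw [hs]
  simp

lemma lintegral_norm3 (f : ℝ → ℝ≥0∞) (hf : Measurable f) :
    ∫⁻ x : EuclideanSpace ℝ (Fin 3), f ‖x‖
      = ENNReal.ofReal (4 * Real.pi) * ∫⁻ r in Ioi (0:ℝ), ENNReal.ofReal (r ^ 2) * f r := by
  have h1 : ∫⁻ x : EuclideanSpace ℝ (Fin 3), f ‖x‖
      = ∫⁻ x : (({0}ᶜ : Set (EuclideanSpace ℝ (Fin 3)))), f ‖(x : EuclideanSpace ℝ (Fin 3))‖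
        ∂((volume : Measure (EuclideanSpace ℝ (Fin 3))).comap (↑)) := by
    rw [lintegral_subtype_comap (μ := (volume : Measure (EuclideanSpace ℝ (Fin 3))))
      (measurableSet_singleton 0).compl (fun y => f ‖y‖), restrict_compl_singleton]
  rw [h1]
  have hmeas : Measurable fun p : sphere (0 : EuclideanSpace ℝ (Fin 3)) 1 × Ioi (0:ℝ) =>
      f p.2 := (hf.comp measurable_subtype_coe).comp measurable_snd
  have h2 := (Measure.measurePreserving_homeomorphUnitSphereProd
      (volume : Measure (EuclideanSpace ℝ (Fin 3)))).lintegral_comp hmeas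
  simp only [homeomorphUnitSphereProd_apply_snd_coe] at h2
  rw [h2]
  rw [lintegral_prod _ hmeas.aemeasurable]
  simp only [lintegral_const]
  have hdim : Module.finrank ℝ (EuclideanSpace ℝ (Fin 3)) - 1 = 2 := by
    simp [finrank_euclideanSpace_fin]
  rw [hdim]
  have hsph : (volume : Measure (EuclideanSpace ℝ (Fin 3))).toSphere univ
      = ENNReal.ofReal (4 * Real.pi) := by
    rw [Measure.toSphere_apply_univ, vol_ball3, finrank_euclideanSpace_fin]
    rw [show ((3:ℕ) : ℝ≥0∞) = ENNReal.ofReal 3 by simp, ← ENNReal.ofReal_mul (by norm_num)]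
    congr 1
    ring
  rw [hsph]
  have hτ : ∫⁻ y : (Ioi (0:ℝ)), f ↑y ∂(Measure.volumeIoiPow 2)
      = ∫⁻ r in Ioi (0:ℝ), ENNReal.ofReal (r ^ 2) * f r := by
    have hg : Measurable fun r : (Ioi (0:ℝ)) => ENNReal.ofReal ((r:ℝ) ^ 2) :=
      (measurable_subtype_coe.pow_const 2).ennreal_ofReal
    have hf' : Measurable fun y : (Ioi (0:ℝ)) => f (y:ℝ) := hf.comp measurable_subtype_coe
    have hwd := lintegral_withDensity_eq_lintegral_mul
      (Measure.comap Subtype.val (volume : Measure ℝ)) hg hf'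
    rw [Measure.volumeIoiPow]
    rw [show (fun r : (Ioi (0:ℝ)) => ENNReal.ofReal ((r:ℝ) ^ 2)) = fun r : (Ioi (0:ℝ)) =>
      ENNReal.ofReal ((r:ℝ) ^ 2) from rfl] at hwd
    rw [hwd]
    exact lintegral_subtype_comap measurableSet_Ioi (fun r => ENNReal.ofReal (r ^ 2) * f r)
  rw [hτ, mul_comm]


def photonW (m : ℕ) : (Fin m → EuclideanSpace ℝ (Fin 3) × Fin 2) → ℝ≥0∞ :=
  fun a => ∏ i, (ENNReal.ofReal (‖(a i).1‖ ^ 2))⁻¹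

lemma measurable_photonW (m : ℕ) : Measurable (photonW m) :=
  Finset.measurable_prod _ fun i _ =>
    (((measurable_pi_apply i).fst.norm.pow_const 2).ennreal_ofReal).inv

lemma measurableSet_sumset (m : ℕ) (t : ℝ) :
    MeasurableSet {a : Fin m → EuclideanSpace ℝ (Fin 3) × Fin 2 | ∑ i, ‖(a i).1‖ ≤ t} :=
  measurableSet_le (Finset.measurable_sum _ fun i _ => (measurable_pi_apply i).fst.norm)
    measurable_const

def Jint (m : ℕ) (t : ℝ) : ℝ≥0∞ :=
  ∫⁻ a, Set.indicator {a | ∑ i, ‖(a i).1‖ ≤ t} (photonW m) a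
    ∂(Measure.pi fun _ : Fin m => photonMeasure)

def Bnd (m : ℕ) (t : ℝ) : ℝ≥0∞ :=
  if 0 ≤ t then ENNReal.ofReal ((8 * Real.pi) ^ m * t ^ m / m.factorial) else 0

lemma measurable_Bnd (m : ℕ) : Measurable (Bnd m) := by
  unfold Bnd
  exact Measurable.ite measurableSet_Ici
    ((measurable_const.mul (measurable_id.pow_const m)).div_const _).ennreal_ofReal
    measurable_const

lemma Jint_neg (m : ℕ) {t : ℝ} (ht : ¬ 0 ≤ t) : Jint m t = 0 := by
  have hset : {a : Fin m → EuclideanSpace ℝ (Fin 3) × Fin 2 | ∑ i, ‖(a i).1‖ ≤ t} = ∅ := by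
    ext a
    simp only [mem_setOf_eq, mem_empty_iff_false, iff_false]
    intro h
    exact ht (le_trans (Finset.sum_nonneg fun i _ => norm_nonneg _) h)
  rw [Jint, hset]
  simp

lemma Jint_le_Bnd (m : ℕ) : ∀ t : ℝ, Jint m t ≤ Bnd m t := by
  induction m with
  | zero =>
    intro t
    by_cases ht : 0 ≤ t
    · rw [Jint, Bnd, if_pos ht]
      have hset : {a : Fin 0 → EuclideanSpace ℝ (Fin 3) × Fin 2 | ∑ i, ‖(a i).1‖ ≤ t} = univ := by
        ext a; simp [ht]
      rw [hset, Set.indicator_univ]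
      have hW : photonW 0 = fun _ => 1 := by funext a; simp [photonW]
      rw [hW, lintegral_one]
      simp [Measure.pi_univ]
    · rw [Jint_neg 0 ht]; exact zero_le
  | succ m ih =>
    intro t
    by_cases ht : 0 ≤ t
    · -- main computation
      set E := EuclideanSpace ℝ (Fin 3) × Fin 2 with hE
      set ν := Measure.pi fun _ : Fin m => photonMeasure with hν
      set g : E × (Fin m → E) → ℝ≥0∞ := fun p =>
        Set.indicator {p : E × (Fin m → E) | ‖p.1.1‖ + ∑ i, ‖(p.2 i).1‖ ≤ t}
          (fun p => (ENNReal.ofReal (‖p.1.1‖ ^ 2))⁻¹ * photonW m p.2) p with hg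
      have hgmeas : Measurable g := by
        apply Measurable.indicator
        · exact ((measurable_fst.fst.norm.pow_const 2).ennreal_ofReal.inv).mul
            ((measurable_photonW m).comp measurable_snd)
        · exact measurableSet_le
            (measurable_fst.fst.norm.add
              (Finset.measurable_sum _ fun i _ =>
                ((measurable_pi_apply i).comp measurable_snd).fst.norm))
            measurable_const
      have hMP := measurePreserving_piFinSuccAbove (fun _ : Fin (m+1) => photonMeasure) 0
      have hcomp : ∀ a : Fin (m+1) → E,
          Set.indicator {a : Fin (m+1) → E | ∑ i, ‖(a i).1‖ ≤ t} (photonW (m+1)) a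
            = g (MeasurableEquiv.piFinSuccAbove (fun _ : Fin (m+1) => E) 0 a) := by
        intro a
        have he : MeasurableEquiv.piFinSuccAbove (fun _ : Fin (m+1) => E) 0 a
            = (a 0, fun j => a j.succ) := by
          simp only [MeasurableEquiv.piFinSuccAbove, Fin.removeNth, Fin.zero_succAbove,
            MeasurableEquiv.coe_mk, Equiv.symm_symm]
          rfl
        rw [he]
        have hsum : ∑ i : Fin (m+1), ‖(a i).1‖ = ‖(a 0).1‖ + ∑ i : Fin m, ‖(a i.succ).1‖ :=
          Fin.sum_univ_succ _
        have hprod : photonW (m+1) a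
            = (ENNReal.ofReal (‖(a 0).1‖ ^ 2))⁻¹ * photonW m (fun j => a j.succ) := by
          rw [photonW, photonW]
          exact Fin.prod_univ_succ _
        simp only [hg, Set.indicator, mem_setOf_eq]
        simp only [hsum, hprod]
      have h1 : Jint (m+1) t = ∫⁻ p, g p ∂(photonMeasure.prod ν) := by
        rw [Jint, lintegral_congr hcomp]
        exact hMP.lintegral_comp hgmeas
      have hinner : ∀ K : E, ∫⁻ b, g (K, b) ∂ν
          = (ENNReal.ofReal (‖K.1‖ ^ 2))⁻¹ * Jint m (t - ‖K.1‖) := by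
        intro K
        have hpt : ∀ b, g (K, b) = (ENNReal.ofReal (‖K.1‖ ^ 2))⁻¹ *
            Set.indicator {b : Fin m → E | ∑ i, ‖(b i).1‖ ≤ t - ‖K.1‖} (photonW m) b := by
          intro b
          simp only [hg, Set.indicator, mem_setOf_eq]
          by_cases hb : ∑ i, ‖(b i).1‖ ≤ t - ‖K.1‖
          · rw [if_pos hb, if_pos (by linarith)]
          · rw [if_neg hb, if_neg (by intro h; exact hb (by linarith)), mul_zero]
        rw [lintegral_congr hpt,
          lintegral_const_mul _ ((measurable_photonW m).indicator (measurableSet_sumset m _))]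
        rfl
      have h2 : Jint (m+1) t
          = ∫⁻ K : E, (ENNReal.ofReal (‖K.1‖ ^ 2))⁻¹ * Jint m (t - ‖K.1‖) ∂photonMeasure := by
        rw [h1, lintegral_prod _ hgmeas.aemeasurable]
        exact lintegral_congr hinner
      -- the bound function on ℝ³
      set f : ℝ → ℝ≥0∞ := fun r => (ENNReal.ofReal (r ^ 2))⁻¹ * Bnd m (t - r) with hf
      have hfmeas : Measurable f :=
        ((measurable_id.pow_const 2).ennreal_ofReal.inv).mul
          ((measurable_Bnd m).comp (measurable_const.sub measurable_id))
      have h3 : Jint (m+1) t ≤ ∫⁻ K : E, f ‖K.1‖ ∂photonMeasure := by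
        rw [h2]
        exact lintegral_mono fun K => mul_le_mul_right (ih _) _
      have h4 : ∫⁻ K : E, f ‖K.1‖ ∂photonMeasure
          = 2 * ∫⁻ k : EuclideanSpace ℝ (Fin 3), f ‖k‖ := by
        have hm : Measurable fun K : EuclideanSpace ℝ (Fin 3) × Fin 2 => f ‖K.1‖ :=
          hfmeas.comp measurable_fst.norm
        rw [photonMeasure,
          lintegral_prod (fun K : EuclideanSpace ℝ (Fin 3) × Fin 2 => f ‖K.1‖) hm.aemeasurable]
        simp only [lintegral_const, Measure.count_univ, Fintype.card_fin]
        have hm' : Measurable fun k : EuclideanSpace ℝ (Fin 3) => f ‖k‖ :=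
          hfmeas.comp measurable_norm
        rw [lintegral_mul_const _ hm', mul_comm]
        norm_num
      have h5 : ∫⁻ k : EuclideanSpace ℝ (Fin 3), f ‖k‖
          = ENNReal.ofReal (4 * Real.pi) * ∫⁻ r in Ioi (0:ℝ), ENNReal.ofReal (r ^ 2) * f r :=
        lintegral_norm3 f hfmeas
      have h6 : ∫⁻ r in Ioi (0:ℝ), ENNReal.ofReal (r ^ 2) * f r
          = ∫⁻ r in Ioi (0:ℝ), Bnd m (t - r) := by
        apply setLIntegral_congr_fun measurableSet_Ioi
        intro r hr
        have hr' : (0:ℝ) < r := hr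
        simp only [hf]
        rw [← mul_assoc, ENNReal.mul_inv_cancel
          (ne_of_gt (ENNReal.ofReal_pos.2 (by positivity))) ENNReal.ofReal_ne_top, one_mul]
      set c : ℝ := (8 * Real.pi) ^ m / m.factorial with hc
      have hc0 : 0 ≤ c := by positivity
      have h7 : (∫⁻ r in Ioi (0:ℝ), Bnd m (t - r))
          = ∫⁻ r in Ioc (0:ℝ) t, ENNReal.ofReal (c * (t - r) ^ m) := by
        have hpt : ∀ r ∈ Ioi (0:ℝ), Bnd m (t - r)
            = (Ioc (0:ℝ) t).indicator (fun r => ENNReal.ofReal (c * (t - r) ^ m)) r := by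
          intro r hr
          by_cases hrt : r ≤ t
          · rw [Set.indicator_of_mem (show r ∈ Ioc (0:ℝ) t from ⟨hr, hrt⟩)]
            simp only [Bnd, if_pos (by linarith : (0:ℝ) ≤ t - r)]
            congr 1
            rw [hc]; ring
          · rw [Set.indicator_of_notMem (fun hmem => hrt hmem.2)]
            simp only [Bnd, if_neg (by intro h; exact hrt (by linarith) : ¬ (0:ℝ) ≤ t - r)]
        rw [setLIntegral_congr_fun measurableSet_Ioi hpt,
          lintegral_indicator measurableSet_Ioc,
          Measure.restrict_restrict measurableSet_Ioc,
          inter_eq_left.2 (fun x hx => hx.1)]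
      have hm1 : ((m:ℝ) + 1) ≠ 0 := by positivity
      have h8 : (∫⁻ r in Ioc (0:ℝ) t, ENNReal.ofReal (c * (t - r) ^ m))
          = ENNReal.ofReal (c * (t ^ (m+1) / ((m:ℝ)+1))) := by
        rw [← ofReal_integral_eq_lintegral_ofReal]
        · congr 1
          rw [← intervalIntegral.integral_of_le ht, intervalIntegral.integral_const_mul]
          have hcs := intervalIntegral.integral_comp_sub_left (a := (0:ℝ)) (b := t)
            (fun x : ℝ => x ^ m) t
          simp only [sub_zero, _root_.sub_self] at hcs
          rw [hcs, integral_pow]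
          norm_num
        · exact Continuous.integrableOn_Ioc
            (continuous_const.mul ((continuous_const.sub continuous_id).pow m))
        · filter_upwards [ae_restrict_mem measurableSet_Ioc] with r hr
          have h9 : (0:ℝ) ≤ t - r := by linarith [hr.2]
          positivity
      calc Jint (m+1) t ≤ ∫⁻ K : E, f ‖K.1‖ ∂photonMeasure := h3
        _ = 2 * (ENNReal.ofReal (4 * Real.pi) * ENNReal.ofReal (c * (t ^ (m+1) / ((m:ℝ)+1)))) := by
            rw [h4, h5, h6, h7, h8]
        _ ≤ Bnd (m+1) t := by
            simp only [Bnd, if_pos ht]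
            rw [show (2:ℝ≥0∞) = ENNReal.ofReal 2 by norm_num,
              ← ENNReal.ofReal_mul (by positivity : (0:ℝ) ≤ 4 * Real.pi),
              ← ENNReal.ofReal_mul (by norm_num : (0:ℝ) ≤ 2)]
            apply le_of_eq
            congr 1
            have hfac : ((m+1).factorial : ℝ) = ((m:ℝ) + 1) * m.factorial := by
              rw [Nat.factorial_succ]; push_cast; ring
            rw [hfac, hc]
            have hm0 : (m.factorial : ℝ) ≠ 0 := Nat.cast_ne_zero.2 m.factorial_ne_zero
            field_simp
            ring
    · rw [Jint_neg (m+1) ht]; exact zero_le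

/-- For a measurable, essentially bounded integral kernel `w` supported
(μ-a.e.) in `S̲_{m,n}`,
`(∫ (8π)^{-(m+n)} ∏ᵢ |kᵢ|⁻² ∏ⱼ |k̃ⱼ|⁻² |w|² dμ)^{1/2} ≤ ‖w‖_∞ (m! n!)^{-1/2}`. -/
theorem weighted_L2_bound_of_kernel (m n : ℕ)
    (w : (Fin m → EuclideanSpace ℝ (Fin 3) × Fin 2) ×
      (Fin n → EuclideanSpace ℝ (Fin 3) × Fin 2) → ℂ)
    (hw_meas : Measurable w)
    (hw_bdd : MemLp w ⊤ (photonProdMeasure m n))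
    (hw_supp : ∀ᵐ x ∂(photonProdMeasure m n), x ∉ underlineS m n → w x = 0) :
    (∫⁻ x, (ENNReal.ofReal ((8 * Real.pi) ^ (m + n)))⁻¹ *
          ((∏ i, (ENNReal.ofReal (‖(x.1 i).1‖ ^ 2))⁻¹) *
            ∏ j, (ENNReal.ofReal (‖(x.2 j).1‖ ^ 2))⁻¹) *
          (‖w x‖₊ : ℝ≥0∞) ^ 2 ∂(photonProdMeasure m n)) ^ (1 / 2 : ℝ)
      ≤ eLpNorm w ⊤ (photonProdMeasure m n) *
          (ENNReal.ofReal (Real.sqrt ((m.factorial : ℝ) * (n.factorial : ℝ))))⁻¹ := by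
  set μ := photonProdMeasure m n with hμ
  set N := eLpNorm w ⊤ μ with hNdef
  have hNfin : N ≠ ∞ := hw_bdd.2.ne
  have hae : ∀ᵐ x ∂μ, (‖w x‖₊ : ℝ≥0∞) ≤ N := by
    rw [hNdef, eLpNorm_exponent_top]
    exact ae_le_eLpNormEssSup
  set A : Set (Fin m → EuclideanSpace ℝ (Fin 3) × Fin 2) := {a | ∑ i, ‖(a i).1‖ ≤ 1} with hA
  set B : Set (Fin n → EuclideanSpace ℝ (Fin 3) × Fin 2) := {a | ∑ i, ‖(a i).1‖ ≤ 1} with hB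
  set cE : ℝ≥0∞ := (ENNReal.ofReal ((8 * Real.pi) ^ (m + n)))⁻¹ with hcE
  set W : (Fin m → EuclideanSpace ℝ (Fin 3) × Fin 2) ×
      (Fin n → EuclideanSpace ℝ (Fin 3) × Fin 2) → ℝ≥0∞ :=
    fun x => photonW m x.1 * photonW n x.2 with hW
  have hWmeas : Measurable W :=
    ((measurable_photonW m).comp measurable_fst).mul ((measurable_photonW n).comp measurable_snd)
  have hbound : ∀ᵐ x ∂μ, cE * W x * (‖w x‖₊ : ℝ≥0∞) ^ 2
      ≤ (A ×ˢ B).indicator (fun x => cE * N ^ 2 * W x) x := by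
    filter_upwards [hae, hw_supp] with x h1 h2
    by_cases hx : x ∈ A ×ˢ B
    · rw [Set.indicator_of_mem hx, mul_right_comm cE (W x) (↑‖w x‖₊ ^ 2)]
      exact mul_le_mul_left (mul_le_mul_right (pow_le_pow_left' h1 2) cE) (W x)
    · rw [Set.indicator_of_notMem hx]
      have hx' : x ∉ underlineS m n := by
        intro hh
        exact hx ⟨hh.2.2.1, hh.2.2.2⟩
      rw [h2 hx']
      simp
  have hle : (∫⁻ x, cE * W x * (‖w x‖₊ : ℝ≥0∞) ^ 2 ∂μ)
      ≤ ∫⁻ x, (A ×ˢ B).indicator (fun x => cE * N ^ 2 * W x) x ∂μ := lintegral_mono_ae hbound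
  have hsplit : ∀ x, (A ×ˢ B).indicator (fun x => cE * N ^ 2 * W x) x
      = cE * N ^ 2 * (A.indicator (photonW m) x.1 * B.indicator (photonW n) x.2) := by
    intro x
    by_cases hx : x ∈ A ×ˢ B
    · rw [Set.indicator_of_mem hx, Set.indicator_of_mem hx.1, Set.indicator_of_mem hx.2, hW]
    · rw [Set.indicator_of_notMem hx]
      rw [mem_prod] at hx
      push_neg at hx
      by_cases hx1 : x.1 ∈ A
      · rw [Set.indicator_of_notMem (hx hx1), mul_zero, mul_zero]
      · rw [Set.indicator_of_notMem hx1, zero_mul, mul_zero]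
  have hprod : (∫⁻ x, A.indicator (photonW m) x.1 * B.indicator (photonW n) x.2 ∂μ)
      = Jint m 1 * Jint n 1 := by
    rw [hμ, photonProdMeasure]
    exact lintegral_prod_mul
      (((measurable_photonW m).indicator (measurableSet_sumset m 1)).aemeasurable)
      (((measurable_photonW n).indicator (measurableSet_sumset n 1)).aemeasurable)
  have hkey : (∫⁻ x, cE * W x * (‖w x‖₊ : ℝ≥0∞) ^ 2 ∂μ)
      ≤ N ^ 2 * ENNReal.ofReal (((m.factorial : ℝ) * (n.factorial : ℝ))⁻¹) := by
    refine hle.trans ?_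
    calc (∫⁻ x, (A ×ˢ B).indicator (fun x => cE * N ^ 2 * W x) x ∂μ)
        = cE * N ^ 2 * (Jint m 1 * Jint n 1) := by
          have hm2 : Measurable fun x : (Fin m → EuclideanSpace ℝ (Fin 3) × Fin 2) ×
              (Fin n → EuclideanSpace ℝ (Fin 3) × Fin 2) =>
              A.indicator (photonW m) x.1 * B.indicator (photonW n) x.2 :=
            (((measurable_photonW m).indicator (measurableSet_sumset m 1)).comp
              measurable_fst).mul (((measurable_photonW n).indicator
                (measurableSet_sumset n 1)).comp measurable_snd)
          rw [lintegral_congr hsplit, lintegral_const_mul _ hm2, hprod]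
      _ ≤ cE * N ^ 2 * (Bnd m 1 * Bnd n 1) := by
          exact mul_le_mul_right (mul_le_mul' (Jint_le_Bnd m 1) (Jint_le_Bnd n 1)) _
      _ = N ^ 2 * ENNReal.ofReal (((m.factorial : ℝ) * (n.factorial : ℝ))⁻¹) := by
          simp only [Bnd, if_pos (zero_le_one : (0:ℝ) ≤ 1), one_pow, mul_one]
          rw [← ENNReal.ofReal_mul (by positivity)]
          have harg : (8 * Real.pi) ^ m / (m.factorial : ℝ) * ((8 * Real.pi) ^ n / n.factorial)
              = (8 * Real.pi) ^ (m + n) * ((m.factorial : ℝ) * (n.factorial : ℝ))⁻¹ := by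
            rw [pow_add]
            have hm0 : (m.factorial : ℝ) ≠ 0 := Nat.cast_ne_zero.2 m.factorial_ne_zero
            have hn0 : (n.factorial : ℝ) ≠ 0 := Nat.cast_ne_zero.2 n.factorial_ne_zero
            field_simp
          rw [harg, ENNReal.ofReal_mul (by positivity), mul_comm cE (N ^ 2), mul_assoc]
          congr 1
          rw [hcE, ← mul_assoc, ENNReal.inv_mul_cancel
            (ne_of_gt (ENNReal.ofReal_pos.2 (by positivity))) ENNReal.ofReal_ne_top, one_mul]
  have hF : (0:ℝ) < (m.factorial : ℝ) * (n.factorial : ℝ) := by positivity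
  have hfin : (N ^ 2 * ENNReal.ofReal (((m.factorial : ℝ) * (n.factorial : ℝ))⁻¹)) ^ (1/2 : ℝ)
      = N * (ENNReal.ofReal (Real.sqrt ((m.factorial : ℝ) * (n.factorial : ℝ))))⁻¹ := by
    rw [ENNReal.mul_rpow_of_nonneg _ _ (by norm_num : (0:ℝ) ≤ 1/2)]
    congr 1
    · rw [← ENNReal.rpow_natCast N 2, ← ENNReal.rpow_mul]
      norm_num
    · rw [ENNReal.ofReal_inv_of_pos hF, ENNReal.inv_rpow]
      congr 1
      rw [ENNReal.ofReal_rpow_of_nonneg hF.le (by norm_num : (0:ℝ) ≤ 1/2)]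
      congr 1
      rw [Real.sqrt_eq_rpow]
  have hgoal : (∫⁻ x, (ENNReal.ofReal ((8 * Real.pi) ^ (m + n)))⁻¹ *
          ((∏ i, (ENNReal.ofReal (‖(x.1 i).1‖ ^ 2))⁻¹) *
            ∏ j, (ENNReal.ofReal (‖(x.2 j).1‖ ^ 2))⁻¹) *
          (‖w x‖₊ : ℝ≥0∞) ^ 2 ∂μ)
      = ∫⁻ x, cE * W x * (‖w x‖₊ : ℝ≥0∞) ^ 2 ∂μ := rfl
  rw [hgoal, ← hfin]
  exact ENNReal.rpow_le_rpow hkey (by norm_num)
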